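/- Let 1 ≤ k ≤ k_0 be integers, let π ∈ ℝ^{k_0} have strictly positive entries with Σ_a π_a = 1, let λ ∈ ℝ^{k_0×k_0} be symmetric with strictly positive entries, and let h : {1,…,k_0} → {1,…,k} be surjective. Then F(π, λ) ≥ F(π*, λ*), where (π*, λ*) are the parameters obtained by merging the communities according to h. -/

import Mathlib

open Finset

/-- Log-sum inequality. -/
lemma log_sum_ineq {ι : Type*} (s : Finset ι) (hs : s.Nonempty)
    (w t : ι → ℝ) (hw : ∀ i ∈ s, 0 < w i) (ht : ∀ i ∈ s, 0 < t i) :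
    (∑ i ∈ s, w i) * Real.log ((∑ i ∈ s, w i) / (∑ i ∈ s, t i)) ≤
      ∑ i ∈ s, w i * Real.log (w i / t i) := by
  set W := ∑ i ∈ s, w i with hW
  set T := ∑ i ∈ s, t i with hT
  have hWpos : 0 < W := Finset.sum_pos hw hs
  have hTpos : 0 < T := Finset.sum_pos ht hs
  have key := Real.convexOn_mul_log.map_sum_le (t := s) (w := fun i => t i / T)
    (p := fun i => w i / t i)
    (fun i hi => by have := ht i hi; positivity)
    (by rw [← Finset.sum_div, ← hT]; field_simp)
    (fun i hi => Set.mem_Ici.2 (by have := ht i hi; have := hw i hi; positivity))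
  have h1 : ∑ i ∈ s, (t i / T) • (w i / t i) = W / T := by
    rw [hW, Finset.sum_div]
    refine Finset.sum_congr rfl fun i hi => ?_
    have := (ht i hi).ne'; have := hTpos.ne'
    field_simp
    ring_nf; field_simp
  rw [h1] at key
  have h2 : ∑ i ∈ s, (t i / T) • ((w i / t i) * Real.log (w i / t i))
      = (1 / T) * ∑ i ∈ s, w i * Real.log (w i / t i) := by
    rw [Finset.mul_sum]
    refine Finset.sum_congr rfl fun i hi => ?_
    have := (ht i hi).ne'; have := hTpos.ne'
    field_simp
    ring_nf; field_simp
  rw [h2] at key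
  have := mul_le_mul_of_nonneg_left key hTpos.le
  calc W * Real.log (W / T) = T * (W / T * Real.log (W / T)) := by
        field_simp
    _ ≤ T * (1 / T * ∑ i ∈ s, w i * Real.log (w i / t i)) := this
    _ = ∑ i ∈ s, w i * Real.log (w i / t i) := by field_simp

/-- `[Lp]_a = Σ_b L_{ab} p_b`. -/
def rowSum {m : ℕ} (L : Fin m → Fin m → ℝ) (p : Fin m → ℝ) (a : Fin m) : ℝ :=
  ∑ b, L a b * p b

/-- `F(p, L) = Σ_{a,b} p_a p_b L_{ab} log(L_{ab} / ([Lp]_a [Lp]_b))`. -/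
noncomputable def F {m : ℕ} (p : Fin m → ℝ) (L : Fin m → Fin m → ℝ) : ℝ :=
  ∑ a, ∑ b, p a * p b * L a b *
    Real.log (L a b / (rowSum L p a * rowSum L p b))

/-- Merged probability vector `π*_c = Σ_{a : h(a) = c} π_a`. -/
def mergedPi {k0 k : ℕ} (h : Fin k0 → Fin k) (p : Fin k0 → ℝ) (c : Fin k) : ℝ :=
  ∑ a ∈ Finset.univ.filter (fun a => h a = c), p a

/-- Merged connectivity matrix
`λ*_{cd} = (Σ_{a : h(a)=c} Σ_{b : h(b)=d} π_a π_b λ_{ab}) / (π*_c π*_d)`. -/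
noncomputable def mergedLambda {k0 k : ℕ} (h : Fin k0 → Fin k)
    (p : Fin k0 → ℝ) (L : Fin k0 → Fin k0 → ℝ) (c d : Fin k) : ℝ :=
  (∑ a ∈ Finset.univ.filter (fun a => h a = c),
      ∑ b ∈ Finset.univ.filter (fun b => h b = d), p a * p b * L a b) /
    (mergedPi h p c * mergedPi h p d)

/-- merging communities can only decrease `F`. -/
theorem merging_decreases_F (k k0 : ℕ) (hk : 1 ≤ k) (hkk0 : k ≤ k0)
    (p : Fin k0 → ℝ) (hp : ∀ a, 0 < p a) (hp1 : ∑ a, p a = 1)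
    (L : Fin k0 → Fin k0 → ℝ) (hLsym : ∀ a b, L a b = L b a)
    (hLpos : ∀ a b, 0 < L a b)
    (h : Fin k0 → Fin k) (hs : Function.Surjective h) :
    F (mergedPi h p) (mergedLambda h p L) ≤ F p L := by
  have hk0 : 0 < k0 := lt_of_lt_of_le hk hkk0
  haveI : NeZero k0 := ⟨hk0.ne'⟩
  have hne : (Finset.univ : Finset (Fin k0)).Nonempty := Finset.univ_nonempty
  -- notation
  set fib : Fin k → Finset (Fin k0) := fun c => Finset.univ.filter (fun a => h a = c) with hfib
  have hfibne : ∀ c, (fib c).Nonempty := fun c => by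
    obtain ⟨a, ha⟩ := hs c
    exact ⟨a, by simp [hfib, ha]⟩
  set w : Fin k0 → Fin k0 → ℝ := fun a b => p a * p b * L a b with hwdef
  set r : Fin k0 → ℝ := fun a => p a * rowSum L p a with hrdef
  have hwpos : ∀ a b, 0 < w a b := fun a b => by
    have := hp a; have := hp b; have := hLpos a b; positivity
  have hrow : ∀ a, 0 < rowSum L p a := fun a =>
    Finset.sum_pos (fun b _ => mul_pos (hLpos a b) (hp b)) hne
  have hrpos : ∀ a, 0 < r a := fun a => mul_pos (hp a) (hrow a)
  have hrsum : ∀ a, r a = ∑ b, w a b := by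
    intro a
    simp only [hrdef, hwdef, rowSum, Finset.mul_sum]
    exact Finset.sum_congr rfl fun b _ => by ring
  set W : Fin k → Fin k → ℝ := fun c d => ∑ a ∈ fib c, ∑ b ∈ fib d, w a b with hWdef
  set R : Fin k → ℝ := fun c => ∑ a ∈ fib c, r a with hRdef
  have hWpos : ∀ c d, 0 < W c d :=
    fun c d => Finset.sum_pos (fun a _ => Finset.sum_pos (fun b _ => hwpos a b) (hfibne d)) (hfibne c)
  have hRpos : ∀ c, 0 < R c := fun c => Finset.sum_pos (fun a _ => hrpos a) (hfibne c)
  have hPi : ∀ c, 0 < mergedPi h p c := fun c =>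
    Finset.sum_pos (fun a _ => hp a) (hfibne c)
  -- Step A : rewrite F p L
  have stepA : F p L = ∑ a, ∑ b, w a b * Real.log (w a b / (r a * r b)) := by
    unfold F
    refine Finset.sum_congr rfl fun a _ => Finset.sum_congr rfl fun b _ => ?_
    have h1 : L a b / (rowSum L p a * rowSum L p b) = w a b / (r a * r b) := by
      have := (hp a).ne'; have := (hp b).ne'
      have := (hrow a).ne'; have := (hrow b).ne'
      simp only [hwdef, hrdef]
      field_simp
    rw [h1]
  -- sum over d of W c d equals R c
  have hWsum : ∀ c, ∑ d, W c d = R c := by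
    intro c
    simp only [hWdef, hRdef]
    rw [Finset.sum_comm]
    refine Finset.sum_congr rfl fun a _ => ?_
    rw [Finset.sum_fiberwise Finset.univ h (fun b => w a b)]
    exact (hrsum a).symm
  -- merged row sum
  have hmrow : ∀ c, rowSum (mergedLambda h p L) (mergedPi h p) c
      = R c / mergedPi h p c := by
    intro c
    unfold rowSum
    have : ∀ d, mergedLambda h p L c d * mergedPi h p d = W c d / mergedPi h p c := by
      intro d
      unfold mergedLambda
      have := (hPi c).ne'; have := (hPi d).ne'
      rw [hWdef, hfib]
      field_simp
      simp only [hwdef]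
      try ring
    rw [Finset.sum_congr rfl fun d _ => this d, ← Finset.sum_div, hWsum]
  -- Step B : rewrite merged F
  have stepB : F (mergedPi h p) (mergedLambda h p L)
      = ∑ c, ∑ d, W c d * Real.log (W c d / (R c * R d)) := by
    unfold F
    refine Finset.sum_congr rfl fun c _ => Finset.sum_congr rfl fun d _ => ?_
    rw [hmrow c, hmrow d]
    have hco : mergedPi h p c * mergedPi h p d * mergedLambda h p L c d = W c d := by
      unfold mergedLambda
      have := (hPi c).ne'; have := (hPi d).ne'
      rw [hWdef, hfib]
      field_simp
      try ring
    have harg : mergedLambda h p L c d / (R c / mergedPi h p c * (R d / mergedPi h p d))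
        = W c d / (R c * R d) := by
      unfold mergedLambda
      have := (hPi c).ne'; have := (hPi d).ne'
      have := (hRpos c).ne'; have := (hRpos d).ne'
      rw [hWdef, hfib]
      field_simp
      try ring
    rw [hco, harg]
  -- Step C : fiberwise decomposition of F p L
  have stepC : F p L = ∑ c, ∑ d, ∑ a ∈ fib c, ∑ b ∈ fib d,
      w a b * Real.log (w a b / (r a * r b)) := by
    rw [stepA]
    rw [← Finset.sum_fiberwise Finset.univ h
      (fun a => ∑ b, w a b * Real.log (w a b / (r a * r b)))]
    refine Finset.sum_congr rfl fun c _ => ?_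
    have hin : ∀ a, (∑ b, w a b * Real.log (w a b / (r a * r b)))
        = ∑ d, ∑ b ∈ fib d, w a b * Real.log (w a b / (r a * r b)) := fun a =>
      (Finset.sum_fiberwise Finset.univ h _).symm
    rw [Finset.sum_congr rfl fun a _ => hin a]
    exact Finset.sum_comm
  -- conclude
  rw [stepB, stepC]
  refine Finset.sum_le_sum fun c _ => Finset.sum_le_sum fun d _ => ?_
  have key := log_sum_ineq ((fib c) ×ˢ (fib d)) ((hfibne c).product (hfibne d))
    (fun x => w x.1 x.2) (fun x => r x.1 * r x.2)
    (fun x _ => hwpos x.1 x.2) (fun x _ => mul_pos (hrpos x.1) (hrpos x.2))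
  rw [Finset.sum_product, Finset.sum_product, Finset.sum_product] at key
  have ht : (∑ a ∈ fib c, ∑ b ∈ fib d, r a * r b) = R c * R d := by
    rw [hRdef, ← Finset.sum_mul_sum]
  rw [ht] at key
  exact key
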